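/- Under the assumptions: (i) f maps U = [ulu·1, olu·1] monotonically, (ii) there exists a solution u_s ∈ U with f(u_s) = u_s, and (iii) for all n, olu·g_n^o + √(olu)·i_n^o + p_n^o ≥ 0, the iterates u^{t+1} := f(u^t) initialized at ū = olu·1 converge to the high-voltage solution u_hv, i.e., a fixed point of f satisfying u_hv ≥ u for every fixed point u of f in [u_s, ū]. -/

import Mathlib

open Finset

/-- Convergence of the monotone DC power flow iterates started at ū = olu·1 to the
high-voltage solution, under monotonicity, existence of a solution in U, and
condition (iii): olu·gₙᵒ + √olu·iₙᵒ + pₙᵒ ≥ 0 for all n. -/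
theorem monotone_iterates_converge_to_hv {P Q : ℕ} (ulu olu : ℝ)
    (g : Fin P → Fin P → ℝ) (gV : Fin P → Fin Q → ℝ)
    (go io c k p : Fin P → ℝ) (v : Fin Q → ℝ)
    (h0 : 0 < ulu) (h1 : ulu ≤ olu)
    (hg : ∀ n m, 0 ≤ g n m) (hgV : ∀ n q, 0 ≤ gV n q)
    (hgo : ∀ n, 0 ≤ go n) (hio : ∀ n, 0 ≤ io n)
    (hc : ∀ n, c n = (∑ m, g n m) + (∑ q, gV n q) + go n)
    (hcpos : ∀ n, 0 < c n)
    (hk : ∀ n, k n = (∑ q, gV n q * v q) - io n)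
    (hv : ∀ q, v q ≤ Real.sqrt olu)
    (f : (Fin P → ℝ) → (Fin P → ℝ))
    (hf : ∀ u n, f u n = (∑ m, g n m / c n * Real.sqrt (u n * u m))
        + k n / c n * Real.sqrt (u n) - p n / c n)
    (hmono : ∀ u ∈ Set.Icc (fun _ => ulu) (fun _ => olu),
      ∀ u' ∈ Set.Icc (fun _ : Fin P => ulu) (fun _ => olu), u ≤ u' → f u ≤ f u')
    (us : Fin P → ℝ)
    (hus : us ∈ Set.Icc (fun _ => ulu) (fun _ => olu))
    (husfix : f us = us)
    (hiii : ∀ n, olu * go n + Real.sqrt olu * io n + p n ≥ 0) :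
    ∃ uhv : Fin P → ℝ,
      Filter.Tendsto (fun t => f^[t] (fun _ => olu)) Filter.atTop (nhds uhv) ∧
      f uhv = uhv ∧
      ∀ u ∈ Set.Icc us (fun _ => olu), f u = u → u ≤ uhv := by
  have holu : 0 < olu := h0.trans_le h1
  set ub : Fin P → ℝ := fun _ => olu with hub
  set lb : Fin P → ℝ := fun _ => ulu with hlb
  have hsq : Real.sqrt olu * Real.sqrt olu = olu := Real.mul_self_sqrt holu.le
  -- f ub ≤ ub
  have hfub : f ub ≤ ub := by
    intro n
    have hcn := hcpos n
    have hform : f ub n =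
        ((∑ m, g n m) * olu + k n * Real.sqrt olu - p n) / c n := by
      rw [hf]
      simp only [hub, Real.sqrt_mul_self holu.le]
      rw [eq_div_iff hcn.ne']
      rw [sub_mul, add_mul, sum_mul]
      field_simp
      rw [← Finset.sum_mul]
      ring
    rw [hform, div_le_iff₀ hcn]
    have hS : (∑ q, gV n q * v q) ≤ (∑ q, gV n q) * Real.sqrt olu := by
      rw [sum_mul]
      exact Finset.sum_le_sum fun q _ =>
        mul_le_mul_of_nonneg_left (hv q) (hgV n q)
    have hS2 : (∑ q, gV n q * v q) * Real.sqrt olu ≤ (∑ q, gV n q) * olu := by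
      calc (∑ q, gV n q * v q) * Real.sqrt olu
          ≤ ((∑ q, gV n q) * Real.sqrt olu) * Real.sqrt olu :=
            mul_le_mul_of_nonneg_right hS (Real.sqrt_nonneg _)
        _ = (∑ q, gV n q) * olu := by rw [mul_assoc, hsq]
    have hiii' := hiii n
    have hkn := hk n
    have hcn' := hc n
    have hubn : ub n = olu := rfl
    rw [hubn, hkn, hcn']
    nlinarith [hS2, hiii', Real.sqrt_nonneg olu, hio n]
  have hub_mem : ub ∈ Set.Icc lb ub :=
    ⟨fun _ => h1, le_refl _⟩
  have hlbus : lb ≤ us := hus.1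
  have husub : us ≤ ub := hus.2
  have hmem : ∀ {x : Fin P → ℝ}, us ≤ x → x ≤ ub → x ∈ Set.Icc lb ub :=
    fun hx1 hx2 => ⟨hlbus.trans hx1, hx2⟩
  -- invariant
  set u : ℕ → (Fin P → ℝ) := fun t => f^[t] ub with hu
  have key : ∀ t, us ≤ u t ∧ u (t + 1) ≤ u t ∧ u t ≤ ub := by
    intro t
    induction t with
    | zero =>
      refine ⟨husub, ?_, le_refl _⟩
      simpa [hu] using hfub
    | succ t ih =>
      obtain ⟨h1', h2', h3'⟩ := ih
      have hmemt : u t ∈ Set.Icc lb ub := hmem h1' h3'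
      have hstep1 : us ≤ u (t + 1) := by
        have := hmono us hus (u t) hmemt h1'
        rw [husfix] at this
        simpa [hu, Function.iterate_succ_apply'] using this
      have hle_ub : u (t + 1) ≤ ub := h2'.trans h3'
      have hmemt1 : u (t + 1) ∈ Set.Icc lb ub := hmem hstep1 hle_ub
      refine ⟨hstep1, ?_, hle_ub⟩
      have := hmono (u (t + 1)) hmemt1 (u t) hmemt h2'
      simpa [hu, Function.iterate_succ_apply'] using this
  -- antitone, bounded below coordinatewise
  have hanti : ∀ n, Antitone fun t => u t n := by
    intro n
    apply antitone_nat_of_succ_le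
    intro t
    exact (key t).2.1 n
  have hbdd : ∀ n, BddBelow (Set.range fun t => u t n) := by
    intro n
    exact ⟨us n, by rintro x ⟨t, rfl⟩; exact (key t).1 n⟩
  set uhv : Fin P → ℝ := fun n => ⨅ t, u t n with huhv
  have htend : ∀ n, Filter.Tendsto (fun t => u t n) Filter.atTop (nhds (uhv n)) :=
    fun n => tendsto_atTop_ciInf (hanti n) (hbdd n)
  have htendsto : Filter.Tendsto u Filter.atTop (nhds uhv) :=
    tendsto_pi_nhds.mpr htend
  -- continuity of f
  have hfc : Continuous f := by
    have hfeq : f = fun w n => (∑ m, g n m / c n * Real.sqrt (w n * w m))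
        + k n / c n * Real.sqrt (w n) - p n / c n :=
      funext fun w => funext fun n => hf w n
    rw [hfeq]
    apply continuous_pi
    intro n
    apply Continuous.sub
    apply Continuous.add
    · apply continuous_finset_sum
      intro m _
      exact continuous_const.mul (Real.continuous_sqrt.comp
        ((continuous_apply n).mul (continuous_apply m)))
    · exact continuous_const.mul (Real.continuous_sqrt.comp (continuous_apply n))
    · exact continuous_const
  have hfix : f uhv = uhv := by
    have h1t : Filter.Tendsto (fun t => u (t + 1)) Filter.atTop (nhds uhv) :=
      htendsto.comp (Filter.tendsto_add_atTop_nat 1)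
    have h2t : Filter.Tendsto (fun t => f (u t)) Filter.atTop (nhds (f uhv)) :=
      (hfc.continuousAt.tendsto).comp htendsto
    have heq : (fun t => u (t + 1)) = fun t => f (u t) := by
      funext t
      simp [hu, Function.iterate_succ_apply']
    rw [heq] at h1t
    exact tendsto_nhds_unique h2t h1t
  refine ⟨uhv, htendsto, hfix, ?_⟩
  intro w hw hwfix
  have hws : us ≤ w := hw.1
  have hwub : w ≤ ub := hw.2
  have hwmem : w ∈ Set.Icc lb ub := hmem hws hwub
  have hwle : ∀ t, w ≤ u t := by
    intro t
    induction t with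
    | zero => exact hwub
    | succ t ih =>
      have := hmono w hwmem (u t) (hmem (key t).1 (key t).2.2) ih
      rw [hwfix] at this
      simpa [hu, Function.iterate_succ_apply'] using this
  intro n
  exact ge_of_tendsto' (htend n) fun t => hwle t n
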